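/- For two distinct complex numbers x = p·e^{is} and y = q·e^{it} with p, q > 0 and s ≠ t (mod 2π), one has (|x−y|/|x/|x| − y/|y||)² − ((|x|+|y|)/2)² = (1/4)(p−q)²·cot²((t−s)/2), which is nonnegative. -/

import Mathlib

/-- For distinct complex numbers `x = p e^{is}`, `y = q e^{it}` with `p, q > 0` and
`s ≠ t (mod 2π)`, one has
`(|x−y|/|x/|x| − y/|y||)² − ((|x|+|y|)/2)² = (1/4)(p−q)² cot²((t−s)/2) ≥ 0`. -/
theorem stmt1 (p q s t : ℝ) (hp : 0 < p) (hq : 0 < q)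
    (hst : Complex.exp (s * Complex.I) ≠ Complex.exp (t * Complex.I)) :
    let x : ℂ := (p : ℂ) * Complex.exp (s * Complex.I)
    let y : ℂ := (q : ℂ) * Complex.exp (t * Complex.I)
    (‖x - y‖ / ‖x / (‖x‖ : ℂ) - y / (‖y‖ : ℂ)‖) ^ 2
        - ((‖x‖ + ‖y‖) / 2) ^ 2
      = (1 / 4) * (p - q) ^ 2 * Real.cot ((t - s) / 2) ^ 2 ∧
    0 ≤ (1 / 4) * (p - q) ^ 2 * Real.cot ((t - s) / 2) ^ 2 := by
  intro x y
  set c : ℝ := Real.cos (t - s) with hcdef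
  -- cos (t-s) ≠ 1
  have hc : c ≠ 1 := by
    intro h
    apply hst
    have hs0 : Real.sin (t - s) = 0 := by
      have h2 := Real.sin_sq_add_cos_sq (t - s)
      rw [← hcdef, h] at h2
      nlinarith
    have he : Complex.exp ((t - s : ℝ) * Complex.I) = 1 := by
      rw [Complex.exp_mul_I, ← Complex.ofReal_cos, ← Complex.ofReal_sin, hs0]
      rw [show Real.cos (t - s) = 1 from h]
      simp
    have : Complex.exp (t * Complex.I) = Complex.exp (s * Complex.I) * Complex.exp ((t - s : ℝ) * Complex.I) := by
      rw [← Complex.exp_add]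
      push_cast
      ring_nf
    rw [he, mul_one] at this
    exact this.symm
  have hc1 : (1 : ℝ) - c ≠ 0 := by
    intro h
    apply hc; linarith
  have hcle : c ≤ 1 := Real.cos_le_one _
  have hx : ‖x‖ = p := by
    show ‖(p : ℂ) * Complex.exp (s * Complex.I)‖ = p
    rw [norm_mul, Complex.norm_exp_ofReal_mul_I, mul_one, Complex.norm_of_nonneg hp.le]
  have hy : ‖y‖ = q := by
    show ‖(q : ℂ) * Complex.exp (t * Complex.I)‖ = q
    rw [norm_mul, Complex.norm_exp_ofReal_mul_I, mul_one, Complex.norm_of_nonneg hq.le]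
  have hxu : x / (‖x‖ : ℂ) = Complex.exp (s * Complex.I) := by
    rw [hx]
    exact mul_div_cancel_left₀ _ (by exact_mod_cast hp.ne')
  have hyu : y / (‖y‖ : ℂ) = Complex.exp (t * Complex.I) := by
    rw [hy]
    exact mul_div_cancel_left₀ _ (by exact_mod_cast hq.ne')
  -- squared norms
  have hB : (‖Complex.exp (s * Complex.I) - Complex.exp (t * Complex.I)‖) ^ 2
      = 2 - 2 * c := by
    rw [Complex.sq_norm, Complex.normSq_apply]
    simp only [Complex.sub_re, Complex.sub_im, Complex.exp_ofReal_mul_I_re,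
      Complex.exp_ofReal_mul_I_im]
    rw [hcdef, Real.cos_sub]
    nlinarith [Real.sin_sq_add_cos_sq s, Real.sin_sq_add_cos_sq t]
  have hA : (‖x - y‖) ^ 2 = p ^ 2 + q ^ 2 - 2 * p * q * c := by
    show (‖(p : ℂ) * Complex.exp (s * Complex.I) - (q : ℂ) * Complex.exp (t * Complex.I)‖) ^ 2 = _
    rw [Complex.sq_norm, Complex.normSq_apply]
    simp only [Complex.sub_re, Complex.sub_im, Complex.mul_re, Complex.mul_im,
      Complex.ofReal_re, Complex.ofReal_im, Complex.exp_ofReal_mul_I_re,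
      Complex.exp_ofReal_mul_I_im]
    rw [hcdef, Real.cos_sub]
    nlinarith [Real.sin_sq_add_cos_sq s, Real.sin_sq_add_cos_sq t]
  have hB0 : (2 : ℝ) - 2 * c ≠ 0 := by intro h; apply hc; linarith
  have hcot : Real.cot ((t - s) / 2) ^ 2 = (1 + c) / (1 - c) := by
    rw [Real.cot_eq_cos_div_sin, div_pow]
    have hcc : Real.cos ((t - s) / 2) ^ 2 = 1 / 2 + c / 2 := by
      rw [Real.cos_sq, hcdef]; ring_nf
    have hss : Real.sin ((t - s) / 2) ^ 2 = 1 / 2 - c / 2 := by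
      rw [Real.sin_sq, hcc]; ring
    have h12 : (1 : ℝ) / 2 - c / 2 ≠ 0 := by intro h; apply hc; linarith
    rw [hcc, hss]
    field_simp
  constructor
  · rw [hxu, hyu, hx, hy, div_pow, hA, hB, hcot]
    field_simp
    ring
  · have : 0 ≤ Real.cot ((t - s) / 2) ^ 2 := sq_nonneg _
    positivity
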